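/- Let R be a commutative ring, d ≥ 2, and let α_1,…,α_d be types. Let E_k : α_k → R and D_k : α_k → R for k = 1,…,d, let F : α_1 → R, and for each i = 2,…,d let A_i : α_{i-1} → R and B_i : α_i → R. Define H(x_1,…,x_d) = Σ_{m=1}^d (∏_{k<m} E_k(x_k))·D_m(x_m)·(∏_{k>m} E_k(x_k)) + F(x_1)·∏_{k=2}^d E_k(x_k) + Σ_{i=2}^d (∏_{k=1}^{i-2} E_k(x_k))·A_i(x_{i-1})·B_i(x_i)·(∏_{k=i+1}^d E_k(x_k)), i.e. the sum of a Laplace-like destruction part and a cascadic creation part. Then H admits a TT representation with all ranks at most 5. (This is the rank bound for the CME operator of a signaling cascade model.) -/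

import Mathlib

open scoped BigOperators


section PathSum
variable {R : Type*} [CommRing R]

def ttContract (r : ℕ → ℕ) (M : ∀ i : ℕ, Matrix (Fin (r i)) (Fin (r (i+1))) R) :
    (d : ℕ) → (Fin (r d) → R) → Fin (r 0) → R
  | 0, v => v
  | d+1, v => ttContract r M d (fun a => ∑ b, M d a b * v b)

lemma tt_pathsum (r : ℕ → ℕ) (M : ∀ i : ℕ, Matrix (Fin (r i)) (Fin (r (i+1))) R) :
    ∀ (d : ℕ) (v : Fin (r d) → R),
      (∑ β : ∀ j : Fin (d+1), Fin (r j),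
        (∏ i : Fin d, M i (β i.castSucc) (β i.succ)) * v (β (Fin.last d)))
      = ∑ a : Fin (r 0), ttContract r M d v a := by
  intro d
  induction d with
  | zero =>
    intro v
    rw [← (Equiv.piUnique (fun j : Fin 1 => Fin (r j))).symm.sum_comp]
    simp [ttContract, Equiv.piUnique, uniqueElim]
  | succ d ih =>
    intro v
    rw [← (Fin.snocEquiv (fun j : Fin (d+2) => Fin (r j))).sum_comp, Fintype.sum_prod_type]
    have hsum : ∀ (b : Fin (r (d+1))) (β' : ∀ i : Fin (d+1), Fin (r i.castSucc)),
        (∏ i : Fin (d+1),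
            M i ((Fin.snocEquiv (fun j : Fin (d+2) => Fin (r j)) (b, β')) i.castSucc)
              ((Fin.snocEquiv (fun j : Fin (d+2) => Fin (r j)) (b, β')) i.succ))
          * v ((Fin.snocEquiv (fun j : Fin (d+2) => Fin (r j)) (b, β')) (Fin.last (d+1)))
        = (∏ i : Fin d, M i (β' i.castSucc) (β' i.succ))
            * (M d (β' (Fin.last d)) b * v b) := by
      intro b β'
      simp only [Fin.snocEquiv_apply]
      rw [Fin.prod_univ_castSucc]
      simp only [Fin.succ_castSucc, Fin.snoc_castSucc, Fin.succ_last, Fin.snoc_last,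
        Fin.coe_castSucc, Fin.val_last]
      ring
    simp only [hsum]
    rw [Finset.sum_comm]
    have h2 : (∑ β' : ∀ i : Fin (d+1), Fin (r i.castSucc), ∑ b : Fin (r ((Fin.last (d+1)) : ℕ)),
          (∏ i : Fin d, M i (β' i.castSucc) (β' i.succ)) * (M d (β' (Fin.last d)) b * v b))
        = ∑ β' : ∀ i : Fin (d+1), Fin (r i.castSucc),
            (∏ i : Fin d, M i (β' i.castSucc) (β' i.succ))
              * (∑ b : Fin (r ((Fin.last (d+1)) : ℕ)), M d (β' (Fin.last d)) b * v b) :=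
      Finset.sum_congr rfl fun β' _ => by rw [Finset.mul_sum]
    rw [h2]
    exact ih (fun a => ∑ b, M d a b * v b)

end PathSum

lemma tt_sum_fin_one {R : Type*} [AddCommMonoid R] {m : ℕ} (h : m = 1) (f : Fin m → R) :
    (∑ a, f a) = f ⟨0, by omega⟩ := by subst h; exact Fin.sum_univ_one f

lemma tt_sum_fin_three {R : Type*} [AddCommMonoid R] {m : ℕ} (h : m = 3) (f : Fin m → R) :
    (∑ a, f a) = f ⟨0, by omega⟩ + f ⟨1, by omega⟩ + f ⟨2, by omega⟩ := by
  subst h; exact Fin.sum_univ_three f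

lemma tt_filter_ge_split {N j : ℕ} (hj : j < N) :
    Finset.univ.filter (fun m : Fin N => j ≤ (m : ℕ)) =
      insert ⟨j, hj⟩ (Finset.univ.filter (fun m : Fin N => j + 1 ≤ (m : ℕ))) := by
  ext m; simp [Fin.ext_iff]; omega

lemma tt_mk_not_mem_ge {N j : ℕ} (hj : j < N) :
    (⟨j, hj⟩ : Fin N) ∉ Finset.univ.filter (fun m : Fin N => j + 1 ≤ (m : ℕ)) := by
  simp

lemma tt_filter_ge_empty {N j : ℕ} (hj : N ≤ j) :
    Finset.univ.filter (fun m : Fin N => j ≤ (m : ℕ)) = ∅ := by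
  ext m; simp; omega

lemma tt_filter_band_split {N j : ℕ} (hj : j < N) {m : ℕ} (hm : j < m) :
    Finset.univ.filter (fun k : Fin N => j ≤ (k : ℕ) ∧ (k : ℕ) < m) =
      insert ⟨j, hj⟩ (Finset.univ.filter (fun k : Fin N => j + 1 ≤ (k : ℕ) ∧ (k : ℕ) < m)) := by
  ext k; simp [Fin.ext_iff]; omega

lemma tt_mk_not_mem_band {N j m : ℕ} (hj : j < N) :
    (⟨j, hj⟩ : Fin N) ∉
      Finset.univ.filter (fun k : Fin N => j + 1 ≤ (k : ℕ) ∧ (k : ℕ) < m) := by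
  simp

lemma tt_filter_band_self {N j : ℕ} :
    Finset.univ.filter (fun k : Fin N => j ≤ (k : ℕ) ∧ (k : ℕ) < j) = ∅ := by
  ext k; simp

section TTAux

variable {R : Type*} [CommRing R] {n : ℕ} {α : Fin (n + 2) → Type*}

/-- rank function: 1 at the boundaries, 3 inside -/
def ttRank (n : ℕ) (j : ℕ) : ℕ := if j = 0 then 1 else if j ≤ n + 1 then 3 else 1

/-- `A` extended to all positions (zero at the last position) -/
def ttAx (A : ∀ j : Fin (n + 1), α j.castSucc → R) : ∀ i : Fin (n + 2), α i → R :=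
  fun i => Fin.lastCases (motive := fun i => α i → R) (fun _ => (0 : R)) (fun j => A j) i

/-- `B` extended to all positions (zero at position 0) -/
def ttBx (B : ∀ j : Fin (n + 1), α j.succ → R) : ∀ i : Fin (n + 2), α i → R :=
  fun i => Fin.cases (motive := fun i => α i → R) (fun _ => (0 : R)) (fun j => B j) i

/-- `D` with `F` folded into position 0 -/
def ttDx (D : ∀ k : Fin (n + 2), α k → R) (F : α 0 → R) : ∀ i : Fin (n + 2), α i → R :=
  fun i y => D i y + (Fin.cases (motive := fun i => α i → R) F (fun _ _ => (0 : R)) i) y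

/-- core entries, as a function of natural-number indices.  Row states:
0 = prefix, 1 = pending, 2 = done; at the last position the (single) column
index means "done". -/
def ttg (E : ∀ k : Fin (n + 2), α k → R) (D : ∀ k : Fin (n + 2), α k → R) (F : α 0 → R)
    (A : ∀ j : Fin (n + 1), α j.castSucc → R) (B : ∀ j : Fin (n + 1), α j.succ → R)
    (i : Fin (n + 2)) (y : α i) (a b : ℕ) : R :=
  let t : ℕ := if (i : ℕ) = n + 1 then 2 else b
  if a = 0 then
    (if t = 0 then E i y else if t = 1 then ttAx A i y else if t = 2 then ttDx D F i y else 0)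
  else if a = 1 then (if t = 2 then ttBx B i y else 0)
  else if a = 2 then (if t = 2 then E i y else 0)
  else 0

def ttGcore (E : ∀ k : Fin (n + 2), α k → R) (D : ∀ k : Fin (n + 2), α k → R) (F : α 0 → R)
    (A : ∀ j : Fin (n + 1), α j.castSucc → R) (B : ∀ j : Fin (n + 1), α j.succ → R) :
    ∀ i : Fin (n + 2), α i → Matrix (Fin (ttRank n i)) (Fin (ttRank n ((i : ℕ) + 1))) R :=
  fun i y => Matrix.of fun a b => ttg E D F A B i y (a : ℕ) (b : ℕ)

variable (E : ∀ k : Fin (n + 2), α k → R) (D : ∀ k : Fin (n + 2), α k → R) (F : α 0 → R)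
  (A : ∀ j : Fin (n + 1), α j.castSucc → R) (B : ∀ j : Fin (n + 1), α j.succ → R)
  (x : ∀ i, α i)

/-- suffix product of the `E`'s from position `j` on -/
def ttEsuf (j : ℕ) : R :=
  ∏ k ∈ Finset.univ.filter (fun k : Fin (n + 2) => j ≤ (k : ℕ)), E k (x k)

/-- the "prefix state" value of the right partial vector at level `j` -/
def ttPv (j : ℕ) : R :=
  (∑ m ∈ Finset.univ.filter (fun m : Fin (n + 2) => j ≤ (m : ℕ)),
    (∏ k ∈ Finset.univ.filter (fun k : Fin (n + 2) => j ≤ (k : ℕ) ∧ (k : ℕ) < (m : ℕ)),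
        E k (x k))
      * ttDx D F m (x m) * ttEsuf E x ((m : ℕ) + 1))
  + ∑ jj ∈ Finset.univ.filter (fun jj : Fin (n + 1) => j ≤ (jj : ℕ)),
    (∏ k ∈ Finset.univ.filter (fun k : Fin (n + 2) => j ≤ (k : ℕ) ∧ (k : ℕ) < (jj : ℕ)),
        E k (x k))
      * A jj (x jj.castSucc) * B jj (x jj.succ) * ttEsuf E x ((jj : ℕ) + 2)

def ttBn (j : ℕ) : R := if h : j < n + 2 then ttBx B ⟨j, h⟩ (x ⟨j, h⟩) else 0

/-- the right partial vector at level `j` -/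
def ttW (j : ℕ) : Fin (ttRank n j) → R := fun a =>
  let s : ℕ := if n + 2 ≤ j then 2 else (a : ℕ)
  if s = 0 then ttPv E D F A B x j
  else if s = 1 then ttBn B x j * ttEsuf E x (j + 1)
  else ttEsuf E x j


lemma ttEsuf_step (i : Fin (n + 2)) :
    ttEsuf E x (i : ℕ) = E i (x i) * ttEsuf E x ((i : ℕ) + 1) := by
  unfold ttEsuf
  rw [tt_filter_ge_split i.isLt, Finset.prod_insert (tt_mk_not_mem_ge i.isLt)]

lemma ttEsuf_top : ttEsuf E x (n + 2) = 1 := by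
  unfold ttEsuf
  rw [tt_filter_ge_empty (le_refl _), Finset.prod_empty]

lemma ttPv_last :
    ttPv E D F A B x (n + 1)
      = ttDx D F (Fin.last (n + 1)) (x (Fin.last (n + 1))) * ttEsuf E x (n + 2) := by
  unfold ttPv
  rw [tt_filter_ge_split (show n + 1 < n + 2 by omega),
    Finset.sum_insert (tt_mk_not_mem_ge _),
    tt_filter_ge_empty (show n + 2 ≤ n + 2 from le_refl _),
    tt_filter_ge_empty (show n + 1 ≤ n + 1 from le_refl _)]
  simp only [Finset.sum_empty, add_zero]
  have h1 : (Finset.univ.filter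
      (fun k : Fin (n + 2) => n + 1 ≤ (k : ℕ) ∧ (k : ℕ) < ((⟨n + 1, by omega⟩ : Fin (n+2)) : ℕ)))
      = ∅ := by
    ext k; simp
  rw [h1, Finset.prod_empty, one_mul]
  have h2 : (⟨n + 1, by omega⟩ : Fin (n + 2)) = Fin.last (n + 1) := rfl
  rw [h2]

lemma ttPv_step (jF : Fin (n + 1)) :
    ttPv E D F A B x (jF : ℕ)
      = E jF.castSucc (x jF.castSucc) * ttPv E D F A B x ((jF : ℕ) + 1)
        + A jF (x jF.castSucc) * B jF (x jF.succ) * ttEsuf E x ((jF : ℕ) + 2)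
        + ttDx D F jF.castSucc (x jF.castSucc) * ttEsuf E x ((jF : ℕ) + 1) := by
  have hj2 : (jF : ℕ) < n + 2 := by omega
  unfold ttPv
  rw [tt_filter_ge_split hj2, Finset.sum_insert (tt_mk_not_mem_ge hj2),
    tt_filter_ge_split (N := n + 1) jF.isLt,
    Finset.sum_insert (tt_mk_not_mem_ge jF.isLt)]
  simp only [Fin.eta]
  have hb0' : (Finset.univ.filter (fun k : Fin (n + 2) =>
      (jF : ℕ) ≤ (k : ℕ) ∧ (k : ℕ) < (jF : ℕ))) = ∅ := tt_filter_band_self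
  rw [hb0', Finset.prod_empty, one_mul, one_mul]
  have hS1 : (∑ m ∈ Finset.univ.filter (fun m : Fin (n + 2) => (jF : ℕ) + 1 ≤ (m : ℕ)),
        (∏ k ∈ Finset.univ.filter
            (fun k : Fin (n + 2) => (jF : ℕ) ≤ (k : ℕ) ∧ (k : ℕ) < (m : ℕ)), E k (x k))
          * ttDx D F m (x m) * ttEsuf E x ((m : ℕ) + 1))
      = E jF.castSucc (x jF.castSucc) *
        ∑ m ∈ Finset.univ.filter (fun m : Fin (n + 2) => (jF : ℕ) + 1 ≤ (m : ℕ)),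
          (∏ k ∈ Finset.univ.filter
              (fun k : Fin (n + 2) => (jF : ℕ) + 1 ≤ (k : ℕ) ∧ (k : ℕ) < (m : ℕ)), E k (x k))
            * ttDx D F m (x m) * ttEsuf E x ((m : ℕ) + 1) := by
    rw [Finset.mul_sum]
    refine Finset.sum_congr rfl ?_
    intro m hm
    have hm' : (jF : ℕ) < (m : ℕ) := by simp at hm; omega
    rw [tt_filter_band_split hj2 hm', Finset.prod_insert (tt_mk_not_mem_band hj2)]
    have : E (⟨(jF : ℕ), hj2⟩ : Fin (n + 2)) (x ⟨(jF : ℕ), hj2⟩)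
        = E jF.castSucc (x jF.castSucc) := rfl
    rw [this]; ring
  have hS2 : (∑ jj ∈ Finset.univ.filter (fun jj : Fin (n + 1) => (jF : ℕ) + 1 ≤ (jj : ℕ)),
        (∏ k ∈ Finset.univ.filter
            (fun k : Fin (n + 2) => (jF : ℕ) ≤ (k : ℕ) ∧ (k : ℕ) < (jj : ℕ)), E k (x k))
          * A jj (x jj.castSucc) * B jj (x jj.succ) * ttEsuf E x ((jj : ℕ) + 2))
      = E jF.castSucc (x jF.castSucc) *
        ∑ jj ∈ Finset.univ.filter (fun jj : Fin (n + 1) => (jF : ℕ) + 1 ≤ (jj : ℕ)),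
          (∏ k ∈ Finset.univ.filter
              (fun k : Fin (n + 2) => (jF : ℕ) + 1 ≤ (k : ℕ) ∧ (k : ℕ) < (jj : ℕ)), E k (x k))
            * A jj (x jj.castSucc) * B jj (x jj.succ) * ttEsuf E x ((jj : ℕ) + 2) := by
    rw [Finset.mul_sum]
    refine Finset.sum_congr rfl ?_
    intro jj hjj
    have hm' : (jF : ℕ) < (jj : ℕ) := by simp at hjj; omega
    rw [tt_filter_band_split hj2 hm', Finset.prod_insert (tt_mk_not_mem_band hj2)]
    have : E (⟨(jF : ℕ), hj2⟩ : Fin (n + 2)) (x ⟨(jF : ℕ), hj2⟩)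
        = E jF.castSucc (x jF.castSucc) := rfl
    rw [this]; ring
  rw [hS1, hS2]
  have hD : ttDx D F (⟨(jF : ℕ), hj2⟩ : Fin (n + 2)) (x ⟨(jF : ℕ), hj2⟩)
      = ttDx D F jF.castSucc (x jF.castSucc) := rfl
  rw [hD]
  ring


def ttM : ∀ i : ℕ, Matrix (Fin (ttRank n i)) (Fin (ttRank n (i + 1))) R :=
  fun i => if h : i < n + 2 then ttGcore E D F A B ⟨i, h⟩ (x ⟨i, h⟩) else 0

lemma ttEsuf_one_eq : ttEsuf E x 1
    = ∏ k ∈ Finset.univ.filter (fun k : Fin (n + 2) => 1 ≤ (k : ℕ)), E k (x k) := rfl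

lemma ttPv_zero :
    ttPv E D F A B x 0
      = (∑ m : Fin (n + 2),
          (∏ k ∈ Finset.univ.filter (fun k : Fin (n + 2) => (k : ℕ) < (m : ℕ)), E k (x k))
            * D m (x m)
            * ∏ k ∈ Finset.univ.filter (fun k : Fin (n + 2) => (m : ℕ) < (k : ℕ)), E k (x k))
        + F (x 0) * ∏ k ∈ Finset.univ.filter (fun k : Fin (n + 2) => 1 ≤ (k : ℕ)), E k (x k)
        + ∑ j : Fin (n + 1),
            (∏ k ∈ Finset.univ.filter (fun k : Fin (n + 2) => (k : ℕ) < (j : ℕ)), E k (x k))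
              * A j (x j.castSucc) * B j (x j.succ)
              * ∏ k ∈ Finset.univ.filter
                  (fun k : Fin (n + 2) => (j : ℕ) + 1 < (k : ℕ)), E k (x k) := by
  unfold ttPv ttEsuf
  have e1 : ∀ N : ℕ, Finset.univ.filter (fun m : Fin N => 0 ≤ (m : ℕ)) = Finset.univ := by
    intro N; ext m; simp
  have e2 : ∀ m : ℕ, (Finset.univ.filter
        (fun k : Fin (n + 2) => 0 ≤ (k : ℕ) ∧ (k : ℕ) < m))
      = Finset.univ.filter (fun k : Fin (n + 2) => (k : ℕ) < m) := by
    intro m; ext k; simp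
  have e3 : ∀ m : ℕ, (Finset.univ.filter (fun k : Fin (n + 2) => m + 1 ≤ (k : ℕ)))
      = Finset.univ.filter (fun k : Fin (n + 2) => m < (k : ℕ)) := by
    intro m; ext k; simp only [Finset.mem_filter, Finset.mem_univ, true_and]; omega
  have e4 : ∀ m : ℕ, (Finset.univ.filter (fun k : Fin (n + 2) => m + 2 ≤ (k : ℕ)))
      = Finset.univ.filter (fun k : Fin (n + 2) => m + 1 < (k : ℕ)) := by
    intro m; ext k; simp; omega
  rw [e1, e1]
  simp only [e2, e3, e4]
  unfold ttDx
  have hsplit : (∑ m : Fin (n + 2),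
        (∏ k ∈ Finset.univ.filter (fun k : Fin (n + 2) => (k : ℕ) < (m : ℕ)), E k (x k))
          * (D m (x m) + (Fin.cases (motive := fun i => α i → R) F (fun _ _ => 0) m) (x m))
          * ∏ k ∈ Finset.univ.filter (fun k : Fin (n + 2) => (m : ℕ) < (k : ℕ)), E k (x k))
      = (∑ m : Fin (n + 2),
          (∏ k ∈ Finset.univ.filter (fun k : Fin (n + 2) => (k : ℕ) < (m : ℕ)), E k (x k))
            * D m (x m)
            * ∏ k ∈ Finset.univ.filter (fun k : Fin (n + 2) => (m : ℕ) < (k : ℕ)), E k (x k))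
        + ∑ m : Fin (n + 2),
          (∏ k ∈ Finset.univ.filter (fun k : Fin (n + 2) => (k : ℕ) < (m : ℕ)), E k (x k))
            * (Fin.cases (motive := fun i => α i → R) F (fun _ _ => 0) m) (x m)
            * ∏ k ∈ Finset.univ.filter (fun k : Fin (n + 2) => (m : ℕ) < (k : ℕ)), E k (x k) := by
    rw [← Finset.sum_add_distrib]
    refine Finset.sum_congr rfl ?_
    intro m _
    ring
  rw [hsplit]
  have hF : (∑ m : Fin (n + 2),
        (∏ k ∈ Finset.univ.filter (fun k : Fin (n + 2) => (k : ℕ) < (m : ℕ)), E k (x k))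
          * (Fin.cases (motive := fun i => α i → R) F (fun _ _ => 0) m) (x m)
          * ∏ k ∈ Finset.univ.filter (fun k : Fin (n + 2) => (m : ℕ) < (k : ℕ)), E k (x k))
      = F (x 0) *
          ∏ k ∈ Finset.univ.filter (fun k : Fin (n + 2) => 1 ≤ (k : ℕ)), E k (x k) := by
    rw [Fin.sum_univ_succ]
    have hz : ∀ m : Fin (n + 1),
        (Fin.cases (motive := fun i => α i → R) F (fun _ _ => 0) m.succ) (x m.succ)
          = 0 := by
      intro m; rw [Fin.cases_succ]
    simp only [hz, mul_zero, zero_mul, Finset.sum_const_zero, add_zero, Fin.cases_zero]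
    have hzero : (Finset.univ.filter
        (fun k : Fin (n + 2) => (k : ℕ) < ((0 : Fin (n + 2)) : ℕ))) = ∅ := by
      ext k; simp
    have hone : (Finset.univ.filter
        (fun k : Fin (n + 2) => ((0 : Fin (n + 2)) : ℕ) < (k : ℕ)))
        = Finset.univ.filter (fun k : Fin (n + 2) => 1 ≤ (k : ℕ)) := by
      ext k; simp [Nat.lt_iff_add_one_le]
    rw [hzero, hone, Finset.prod_empty, one_mul]
  rw [hF]
  have e5 : (Finset.univ.filter (fun k : Fin (n + 2) => 0 < (k : ℕ)))
      = Finset.univ.filter (fun k : Fin (n + 2) => 1 ≤ (k : ℕ)) := by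
    ext k; simp [Nat.lt_iff_add_one_le]
  rw [e5]

lemma ttW_step (j : ℕ) (hj : j < n + 2) (a : Fin (ttRank n j)) :
    (∑ b, ttM E D F A B x j a b * ttW E D F A B x (j + 1) b)
      = ttW E D F A B x j a := by
  have hav : (a : ℕ) = 0 ∨ (a : ℕ) = 1 ∨ (a : ℕ) = 2 := by
    have h := a.isLt
    have h2 : ttRank n j ≤ 3 := by unfold ttRank; split_ifs <;> omega
    omega
  simp only [ttM, dif_pos hj]
  by_cases hjn : j ≤ n
  · have h3 : ttRank n (j + 1) = 3 := by
      unfold ttRank; rw [if_neg (by omega), if_pos (by omega)]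
    have hjn1 : ¬ (j = n + 1) := by omega
    have hw1 : ¬ (n + 2 ≤ j + 1) := by omega
    have hw0 : ¬ (n + 2 ≤ j) := by omega
    rw [tt_sum_fin_three h3]
    simp only [ttGcore, Matrix.of_apply, ttg, ttW]
    simp only [if_neg hjn1, if_neg hw1, if_neg hw0]
    rcases hav with ha | ha | ha <;> simp only [ha] <;> norm_num
    · -- a = 0
      have hjn' : j < n + 1 := by omega
      have hA : ttAx A (⟨j, hj⟩ : Fin (n + 2)) = A ⟨j, hjn'⟩ := by
        show ttAx A (Fin.castSucc ⟨j, hjn'⟩) = A ⟨j, hjn'⟩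
        unfold ttAx
        rw [Fin.lastCases_castSucc]
      have hB : ttBn B x (j + 1) = B ⟨j, hjn'⟩ (x ((⟨j, hjn'⟩ : Fin (n + 1)).succ)) := by
        unfold ttBn
        rw [dif_pos (show j + 1 < n + 2 by omega)]
        show ttBx B ((⟨j, hjn'⟩ : Fin (n + 1)).succ) (x ((⟨j, hjn'⟩ : Fin (n + 1)).succ)) = _
        unfold ttBx
        rw [Fin.cases_succ]
      have key := ttPv_step E D F A B x ⟨j, hjn'⟩
      simp only [show (((⟨j, hjn'⟩ : Fin (n + 1)) : ℕ)) = j from rfl] at key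
      rw [hA, hB, ← mul_assoc]
      exact key.symm
    · -- a = 1
      unfold ttBn; rw [dif_pos hj]
    · -- a = 2
      have := ttEsuf_step E x (⟨j, hj⟩ : Fin (n + 2))
      simp only [show ((⟨j, hj⟩ : Fin (n + 2)) : ℕ) = j from rfl] at this
      rw [← this]
  · have hjeq : j = n + 1 := by omega
    subst hjeq
    have h1 : ttRank n (n + 1 + 1) = 1 := by
      unfold ttRank; rw [if_neg (by omega), if_neg (by omega)]
    rw [tt_sum_fin_one h1]
    simp only [ttGcore, Matrix.of_apply, ttg, ttW]
    simp only [if_pos rfl, if_pos (show n + 2 ≤ n + 1 + 1 from le_refl _),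
      if_neg (show ¬ (n + 2 ≤ n + 1) by omega)]
    rcases hav with ha | ha | ha <;> simp only [ha] <;> norm_num
    · -- a = 0
      exact (ttPv_last E D F A B x).symm
    · -- a = 1
      unfold ttBn; rw [dif_pos hj]
    · -- a = 2
      have := ttEsuf_step E x (⟨n + 1, hj⟩ : Fin (n + 2))
      simp only [show ((⟨n + 1, hj⟩ : Fin (n + 2)) : ℕ) = n + 1 from rfl] at this
      rw [← this]

lemma ttContract_eq :
    ∀ d, d ≤ n + 2 →
      ttContract (ttRank n) (ttM E D F A B x) d (ttW E D F A B x d)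
        = ttW E D F A B x 0
  | 0, _ => rfl
  | (d + 1), hd => by
      have hstep : (fun a => ∑ b, ttM E D F A B x d a b * ttW E D F A B x (d + 1) b)
          = ttW E D F A B x d :=
        funext fun a => ttW_step E D F A B x d (by omega) a
      simp only [ttContract]
      rw [hstep]
      exact ttContract_eq d (by omega)

end TTAux

/-- `f` admits a tensor-train (TT) representation with ranks `r 0, …, r d`
(with `r 0 = r d = 1`): there are cores `G i` such that `f x` equals the `(0,0)`
entry of the matrix product `G 0 (x 0) * ⋯ * G (d-1) (x (d-1))`, written here as
the sum over all index paths (the boundary indices range over `Fin 1`). -/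
def IsTTRep {R : Type*} [CommRing R] {d : ℕ} {α : Fin d → Type*}
    (f : (∀ i, α i) → R) (r : Fin (d + 1) → ℕ) : Prop :=
  r 0 = 1 ∧ r (Fin.last d) = 1 ∧
    ∃ G : ∀ i : Fin d, α i → Matrix (Fin (r i.castSucc)) (Fin (r i.succ)) R,
      ∀ x : ∀ i, α i,
        f x = ∑ β : ∀ j : Fin (d + 1), Fin (r j),
                ∏ i : Fin d, G i (x i) (β i.castSucc) (β i.succ)


/-- **Rank-5 TT bound for the CME operator of a signaling cascade**
(Corollary 4.5 of the paper): the sum of a Laplace-like (destruction) part and a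
cascadic (creation) part admits a TT representation with all ranks at most 5.
The dimension is `d = n + 2 ≥ 2`; positions are 0-based, and the pair terms
(indexed by `j : Fin (n + 1)`) act on the adjacent positions `j.castSucc`,
`j.succ`. -/
theorem cascade_cme_operator_tt_rank_le_five {R : Type*} [CommRing R] (n : ℕ)
    (α : Fin (n + 2) → Type*)
    (E : ∀ k : Fin (n + 2), α k → R) (D : ∀ k : Fin (n + 2), α k → R)
    (F : α 0 → R)
    (A : ∀ j : Fin (n + 1), α j.castSucc → R)
    (B : ∀ j : Fin (n + 1), α j.succ → R)
    (H : (∀ i, α i) → R)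
    (hH : ∀ x : ∀ i, α i,
      H x = (∑ m : Fin (n + 2),
              (∏ k ∈ Finset.univ.filter (fun k : Fin (n + 2) => (k : ℕ) < (m : ℕ)), E k (x k))
              * D m (x m)
              * ∏ k ∈ Finset.univ.filter (fun k : Fin (n + 2) => (m : ℕ) < (k : ℕ)), E k (x k))
          + F (x 0) *
              ∏ k ∈ Finset.univ.filter (fun k : Fin (n + 2) => 1 ≤ (k : ℕ)), E k (x k)
          + ∑ j : Fin (n + 1),
              (∏ k ∈ Finset.univ.filter (fun k : Fin (n + 2) => (k : ℕ) < (j : ℕ)), E k (x k))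
              * A j (x j.castSucc) * B j (x j.succ)
              * ∏ k ∈ Finset.univ.filter (fun k : Fin (n + 2) => (j : ℕ) + 1 < (k : ℕ)),
                  E k (x k)) :
    ∃ r : Fin (n + 3) → ℕ, (∀ j, r j ≤ 5) ∧ IsTTRep H r := by

  classical
  refine ⟨fun j => ttRank n (j : ℕ), ?_, ?_, ?_, ttGcore E D F A B, ?_⟩
  · intro j; simp only [ttRank]; split_ifs <;> omega
  · show ttRank n ((0 : Fin (n + 3)) : ℕ) = 1
    norm_num [ttRank]
  · show ttRank n ((Fin.last (n + 2)) : ℕ) = 1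
    show ttRank n (n + 2) = 1
    unfold ttRank
    rw [if_neg (by omega), if_neg (by omega)]
  · intro x
    have hpath := tt_pathsum (ttRank n) (ttM E D F A B x) (n + 2) (ttW E D F A B x (n + 2))
    have hv : ∀ b : Fin (ttRank n (n + 2 + 1 - 1)), ttW E D F A B x (n + 2) b = 1 := by
      intro b
      have h2 : ¬ ((b : ℕ) = 0 ∧ ¬ (n + 2 ≤ n + 2)) := by omega
      simp only [ttW]
      rw [if_pos (le_refl (n + 2))]
      norm_num
      exact ttEsuf_top E x
    have h00 : (0 : ℕ) < ttRank n 0 := by norm_num [ttRank]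
    calc H x = ttPv E D F A B x 0 := by rw [hH x, ttPv_zero]
    _ = ttW E D F A B x 0 ⟨0, h00⟩ := by
        simp only [ttW]
        rw [if_neg (show ¬ (n + 2 ≤ 0) by omega)]
        norm_num
    _ = ttContract (ttRank n) (ttM E D F A B x) (n + 2) (ttW E D F A B x (n + 2)) ⟨0, h00⟩ := by
        rw [ttContract_eq E D F A B x (n + 2) (le_refl _)]
    _ = ∑ a : Fin (ttRank n 0),
          ttContract (ttRank n) (ttM E D F A B x) (n + 2) (ttW E D F A B x (n + 2)) a :=
        (tt_sum_fin_one (show ttRank n 0 = 1 by norm_num [ttRank]) _).symm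
    _ = ∑ β : ∀ j : Fin (n + 3), Fin (ttRank n (j : ℕ)),
          (∏ i : Fin (n + 2), ttM E D F A B x (i : ℕ) (β i.castSucc) (β i.succ))
            * ttW E D F A B x (n + 2) (β (Fin.last (n + 2))) := hpath.symm
    _ = ∑ β : ∀ j : Fin (n + 3), Fin (ttRank n (j : ℕ)),
          ∏ i : Fin (n + 2), ttGcore E D F A B i (x i) (β i.castSucc) (β i.succ) := by
        refine Finset.sum_congr rfl ?_
        intro β _
        rw [hv, mul_one]
        refine Finset.prod_congr rfl ?_
        intro i _
        simp only [ttM, dif_pos i.isLt, Fin.eta]
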